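/- For all integers r ≥ 3 and n ≥ 2, every G^{(r)}_5-free r-graph on n vertices has at most (2/(r²-r-1))·C(n,2) edges. -/

import Mathlib

open Finset

/-- `G` is an `r`-graph: a finite set of edges, each edge a finite set of exactly `r` vertices. -/
def IsRGraph {V : Type*} (r : ℕ) (G : Finset (Finset V)) : Prop :=
  ∀ e ∈ G, e.card = r

/-- `G` contains an `(s,k)`-configuration: `k` distinct edges spanning at most `s` vertices. -/
def HasConfig {V : Type*} [DecidableEq V] (s k : ℕ) (G : Finset (Finset V)) : Prop :=
  ∃ S ⊆ G, S.card = k ∧ (S.biUnion id).card ≤ s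

/-- `G` is `(s,k)`-free. -/
def ConfigFree {V : Type*} [DecidableEq V] (s k : ℕ) (G : Finset (Finset V)) : Prop :=
  ¬ HasConfig s k G

/-- `G` is `𝒢^{(r)}_k`-free: `(rk-2k+2, k)`-free and `(rℓ-2ℓ+1, ℓ)`-free for `2 ≤ ℓ ≤ k-1`. -/
def GFree {V : Type*} [DecidableEq V] (r k : ℕ) (G : Finset (Finset V)) : Prop :=
  ConfigFree (r * k - 2 * k + 2) k G ∧
    ∀ ℓ, 2 ≤ ℓ → ℓ ≤ k - 1 → ConfigFree (r * ℓ - 2 * ℓ + 1) ℓ G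

namespace BES

variable {n : ℕ}

def pairs (e : Finset (Fin n)) : Finset (Finset (Fin n)) := Finset.powersetCard 2 e

lemma mem_pairs {e p : Finset (Fin n)} : p ∈ pairs e ↔ p ⊆ e ∧ p.card = 2 := by
  simp [pairs, Finset.mem_powersetCard]

lemma card_pairs {r : ℕ} {e : Finset (Fin n)} (he : e.card = r) :
    (pairs e).card = r.choose 2 := by
  simp [pairs, Finset.card_powersetCard, he]

def Adj (e f : Finset (Fin n)) : Prop := e ≠ f ∧ 2 ≤ (e ∩ f).card

lemma adj_symm {e f : Finset (Fin n)} (h : Adj e f) : Adj f e := by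
  refine ⟨h.1.symm, ?_⟩
  rw [Finset.inter_comm]; exact h.2

inductive Lk : Finset (Finset (Fin n)) → Prop
  | single (e : Finset (Fin n)) : Lk {e}
  | grow (S : Finset (Finset (Fin n))) (f : Finset (Fin n)) (hS : Lk S)
      (hf : f ∉ S) (e : Finset (Fin n)) (he : e ∈ S) (h2 : 2 ≤ (e ∩ f).card) :
      Lk (insert f S)

lemma lk_nonempty {S : Finset (Finset (Fin n))} (h : Lk S) : S.Nonempty := by
  induction h with
  | single e => exact ⟨e, mem_singleton_self e⟩
  | grow S f hS hf e he h2 ih => exact ⟨f, mem_insert_self f S⟩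

section
variable {r : ℕ} {G : Finset (Finset (Fin n))}

lemma mk_config {s k : ℕ} (S : Finset (Finset (Fin n))) (hS : S ⊆ G) (hcard : S.card = k)
    (hu : (S.biUnion id).card ≤ s) (hfree : ConfigFree s k G) : False :=
  hfree ⟨S, hS, hcard, hu⟩

lemma biUnion_pair_eq (e f : Finset (Fin n)) :
    (({e, f} : Finset (Finset (Fin n))).biUnion id) = e ∪ f := by
  simp [Finset.biUnion_insert]

variable (hr : 3 ≤ r) (hG : IsRGraph r G) (hfree : GFree r 5 G)
include hr hG hfree

lemma inter_le_two {e f : Finset (Fin n)} (he : e ∈ G) (hf : f ∈ G) (hef : e ≠ f) :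
    (e ∩ f).card ≤ 2 := by
  by_contra hc
  push_neg at hc
  have hu : (e ∪ f).card + (e ∩ f).card = r + r := by
    rw [Finset.card_union_add_card_inter, hG e he, hG f hf]
  have h2 : ConfigFree (r * 2 - 2 * 2 + 1) 2 G := hfree.2 2 le_rfl (by norm_num)
  refine mk_config {e, f} ?_ ?_ ?_ h2
  · intro x hx; simp at hx; rcases hx with rfl | rfl <;> assumption
  · rw [Finset.card_insert_of_notMem (by simpa using hef), Finset.card_singleton]
  · rw [biUnion_pair_eq]
    omega

lemma union_lower {S : Finset (Finset (Fin n))} (hS : S ⊆ G) (h2 : 2 ≤ S.card)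
    (h4 : S.card ≤ 4) : r * S.card + 2 ≤ (S.biUnion id).card + 2 * S.card := by
  by_contra hc
  push_neg at hc
  refine mk_config S hS rfl ?_ (hfree.2 S.card h2 (by omega))
  set R := r * S.card with hR
  omega

lemma lk_main {S : Finset (Finset (Fin n))} (hLk : Lk S) (hS : S ⊆ G) (h4 : S.card ≤ 4) :
    (S.biUnion id).card + 2 * S.card = r * S.card + 2 ∧
    S.card * r.choose 2 + 1 ≤ (S.biUnion pairs).card + S.card := by
  induction hLk with
  | single e =>
      have he : e ∈ G := hS (mem_singleton_self e)
      constructor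
      · simp [hG e he]
      · simp [card_pairs (hG e he)]
  | grow S f hSLk hf e he h2 ih =>
      have hm : (insert f S).card = S.card + 1 := card_insert_of_notMem hf
      have hS1 : 1 ≤ S.card := Finset.card_pos.mpr (lk_nonempty hSLk)
      have hS' : S ⊆ G := fun x hx => hS (mem_insert_of_mem hx)
      have hfG : f ∈ G := hS (mem_insert_self f S)
      have h4' : S.card ≤ 4 := by omega
      obtain ⟨ihu, ihc⟩ := ih hS' h4'
      have heW : e ⊆ S.biUnion id := Finset.subset_biUnion_of_mem id he
      have hfW2 : 2 ≤ (f ∩ S.biUnion id).card := by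
        refine le_trans h2 (Finset.card_le_card ?_)
        exact Finset.subset_inter (Finset.inter_subset_right)
          (le_trans (Finset.inter_subset_left) heW)
      have hbu : (insert f S).biUnion id = f ∪ S.biUnion id := Finset.biUnion_insert
      have hcui : (f ∪ S.biUnion id).card + (f ∩ S.biUnion id).card
          = r + (S.biUnion id).card := by
        rw [Finset.card_union_add_card_inter, hG f hfG]
      have hlow : r * (S.card + 1) + 2 ≤ ((insert f S).biUnion id).card
          + 2 * (S.card + 1) := by
        have := union_lower hr hG hfree hS (by omega) (by omega)
        rwa [hm] at this
      rw [hbu] at hlow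
      have hre : r * (S.card + 1) = r * S.card + r := by ring
      rw [hre] at hlow
      have hiW : (f ∩ S.biUnion id).card = 2 := by omega
      constructor
      · rw [hbu, hm, hre]
        omega
      · -- covered pairs count
        have hbp : (insert f S).biUnion pairs = pairs f ∪ S.biUnion pairs :=
          Finset.biUnion_insert
        have hint : (pairs f ∩ S.biUnion pairs).card ≤ 1 := by
          refine Finset.card_le_one.mpr ?_
          intro p hp q hq
          have hps : ∀ x ∈ pairs f ∩ S.biUnion pairs, x = f ∩ S.biUnion id := by
            intro x hx
            rcases Finset.mem_inter.mp hx with ⟨hx1, hx2⟩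
            rcases mem_pairs.mp hx1 with ⟨hxf, hxc⟩
            rcases Finset.mem_biUnion.mp hx2 with ⟨g, hgS, hxg⟩
            rcases mem_pairs.mp hxg with ⟨hxg', _⟩
            have hxsub : x ⊆ f ∩ S.biUnion id :=
              Finset.subset_inter hxf
                (le_trans hxg' (Finset.subset_biUnion_of_mem id hgS))
            exact Finset.eq_of_subset_of_card_le hxsub (by omega) ▸ rfl
          rw [hps p hp, hps q hq]
        have hcup : (pairs f ∪ S.biUnion pairs).card + (pairs f ∩ S.biUnion pairs).card
            = r.choose 2 + (S.biUnion pairs).card := by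
          rw [Finset.card_union_add_card_inter, card_pairs (hG f hfG)]
        rw [hbp, hm]
        have hre2 : (S.card + 1) * r.choose 2 = S.card * r.choose 2 + r.choose 2 := by ring
        set C2 := r.choose 2 with hC2
        set M := S.card * C2 with hM
        omega

lemma lk_card_ne_five {S : Finset (Finset (Fin n))} (hLk : Lk S) (hS : S ⊆ G)
    (h5 : S.card = 5) : False := by
  cases hLk with
  | single e => simp at h5
  | grow S f hSLk hf e he h2 =>
      have hm : (insert f S).card = S.card + 1 := card_insert_of_notMem hf
      have h4 : S.card = 4 := by omega
      have hS' : S ⊆ G := fun x hx => hS (mem_insert_of_mem hx)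
      have hfG : f ∈ G := hS (mem_insert_self f S)
      obtain ⟨ihu, _⟩ := lk_main hr hG hfree hSLk hS' (by omega)
      rw [h4] at ihu
      have heW : e ⊆ S.biUnion id := Finset.subset_biUnion_of_mem id he
      have hfW2 : 2 ≤ (f ∩ S.biUnion id).card := by
        refine le_trans h2 (Finset.card_le_card ?_)
        exact Finset.subset_inter (Finset.inter_subset_right)
          (le_trans (Finset.inter_subset_left) heW)
      have hcui : (f ∪ S.biUnion id).card + (f ∩ S.biUnion id).card
          = r + (S.biUnion id).card := by
        rw [Finset.card_union_add_card_inter, hG f hfG]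
      refine mk_config (insert f S) hS (by omega) ?_ hfree.1
      rw [Finset.biUnion_insert]
      simp only [id_eq]
      omega

end

end BES

namespace BES2
open BES

variable {n : ℕ}

def Step (G : Finset (Finset (Fin n))) (a b : Finset (Fin n)) : Prop :=
  a ∈ G ∧ b ∈ G ∧ Adj a b

def Reach (G : Finset (Finset (Fin n))) : Finset (Fin n) → Finset (Fin n) → Prop :=
  Relation.ReflTransGen (Step G)

lemma step_symm {G : Finset (Finset (Fin n))} : Symmetric (Step G) := by
  intro a b ⟨h1, h2, h3⟩; exact ⟨h2, h1, adj_symm h3⟩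

lemma reach_symm {G : Finset (Finset (Fin n))} {a b : Finset (Fin n)}
    (h : Reach G a b) : Reach G b a := by
  unfold Reach at h ⊢
  induction h with
  | refl => exact Relation.ReflTransGen.refl
  | tail _ hbc ih => exact Relation.ReflTransGen.head (step_symm hbc) ih

lemma reach_trans {G : Finset (Finset (Fin n))} {a b c : Finset (Fin n)}
    (h1 : Reach G a b) (h2 : Reach G b c) : Reach G a c :=
  Relation.ReflTransGen.trans h1 h2

noncomputable def cl (G : Finset (Finset (Fin n))) (e : Finset (Fin n)) :
    Finset (Finset (Fin n)) :=
  @Finset.filter _ (fun f => Reach G e f) (Classical.decPred _) G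

lemma mem_cl {G : Finset (Finset (Fin n))} {e f : Finset (Fin n)} :
    f ∈ cl G e ↔ f ∈ G ∧ Reach G e f := by
  simp [cl, @Finset.mem_filter _ _ (Classical.decPred _)]

lemma self_mem_cl {G : Finset (Finset (Fin n))} {e : Finset (Fin n)} (he : e ∈ G) :
    e ∈ cl G e := mem_cl.mpr ⟨he, Relation.ReflTransGen.refl⟩

lemma cl_subset {G : Finset (Finset (Fin n))} {e : Finset (Fin n)} : cl G e ⊆ G := by
  intro f hf; exact (mem_cl.mp hf).1

lemma cl_eq_of_reach {G : Finset (Finset (Fin n))} {e f : Finset (Fin n)}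
    (h : Reach G e f) : cl G e = cl G f := by
  ext g
  simp only [mem_cl]
  exact ⟨fun ⟨hg, hr⟩ => ⟨hg, reach_trans (reach_symm h) hr⟩,
    fun ⟨hg, hr⟩ => ⟨hg, reach_trans h hr⟩⟩

lemma cl_eq_of_mem {G : Finset (Finset (Fin n))} {e f : Finset (Fin n)}
    (h : f ∈ cl G e) : cl G e = cl G f := cl_eq_of_reach (mem_cl.mp h).2

lemma cl_closed {G : Finset (Finset (Fin n))} {e g h : Finset (Fin n)}
    (hg : g ∈ cl G e) (hh : h ∈ G) (hadj : Adj g h) : h ∈ cl G e := by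
  rcases mem_cl.mp hg with ⟨hgG, hr⟩
  exact mem_cl.mpr ⟨hh, reach_trans hr (Relation.ReflTransGen.single ⟨hgG, hh, hadj⟩)⟩

lemma crossing {G : Finset (Finset (Fin n))} {e : Finset (Fin n)}
    {S : Finset (Finset (Fin n))} (hScl : S ⊆ cl G e) (x0 : Finset (Fin n)) (hx0 : x0 ∈ S)
    {f : Finset (Fin n)} (hfcl : f ∈ cl G e) (hfS : f ∉ S) :
    ∃ a ∈ S, ∃ b, b ∈ cl G e ∧ b ∉ S ∧ Adj a b := by
  have hx0cl : x0 ∈ cl G e := hScl hx0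
  have hreach : Reach G x0 f :=
    reach_trans (reach_symm (mem_cl.mp hx0cl).2) (mem_cl.mp hfcl).2
  -- induct over the path
  induction hreach with
  | refl => exact absurd hx0 hfS
  | @tail b c hab hbc ih =>
      by_cases hbS : b ∈ S
      · refine ⟨b, hbS, c, ?_, hfS, hbc.2.2⟩
        exact cl_closed (hScl hbS) hbc.2.1 hbc.2.2
      · have hbcl : b ∈ cl G e :=
          mem_cl.mpr ⟨hbc.1, reach_trans (mem_cl.mp hx0cl).2 hab⟩
        exact ih hbcl hbS

section
variable {r : ℕ} {G : Finset (Finset (Fin n))}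
variable (hr : 3 ≤ r) (hG : IsRGraph r G) (hfree : GFree r 5 G)
include hr hG hfree

lemma exists_lk_in_cl {e : Finset (Fin n)} (he : e ∈ G) (t : ℕ) (h1 : 1 ≤ t)
    (ht : t ≤ (cl G e).card) : ∃ S, S ⊆ cl G e ∧ S.card = t ∧ Lk S := by
  induction t with
  | zero => omega
  | succ t ih =>
      rcases Nat.eq_or_lt_of_le h1 with h1' | h1'
      · exact ⟨{e}, by simp [self_mem_cl he], by simp [← h1'], Lk.single e⟩
      · obtain ⟨S, hScl, hScard, hSLk⟩ := ih (by omega) (by omega)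
        have hfex : ∃ f ∈ cl G e, f ∉ S := by
          by_contra hc
          push_neg at hc
          have : (cl G e).card ≤ S.card := Finset.card_le_card hc
          omega
        obtain ⟨f, hfcl, hfS⟩ := hfex
        obtain ⟨x0, hx0⟩ := lk_nonempty hSLk
        obtain ⟨a, haS, b, hbcl, hbS, hadj⟩ := crossing hScl x0 hx0 hfcl hfS
        refine ⟨insert b S, ?_, ?_, ?_⟩
        · intro x hx
          rcases Finset.mem_insert.mp hx with rfl | hx'
          · exact hbcl
          · exact hScl hx'
        · rw [Finset.card_insert_of_notMem hbS]; omega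
        · exact Lk.grow S b hSLk hbS a haS hadj.2

lemma cl_card_le_four {e : Finset (Fin n)} (he : e ∈ G) : (cl G e).card ≤ 4 := by
  by_contra hc
  push_neg at hc
  obtain ⟨S, hScl, hScard, hSLk⟩ := exists_lk_in_cl hr hG hfree he 5 (by omega) (by omega)
  exact lk_card_ne_five hr hG hfree hSLk (le_trans hScl cl_subset) hScard

lemma lk_cl {e : Finset (Fin n)} (he : e ∈ G) : Lk (cl G e) := by
  obtain ⟨S, hScl, hScard, hSLk⟩ :=
    exists_lk_in_cl hr hG hfree he (cl G e).card
      (by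
        have : e ∈ cl G e := self_mem_cl he
        have := Finset.card_pos.mpr ⟨e, this⟩
        omega)
      le_rfl
  have : S = cl G e := Finset.eq_of_subset_of_card_le hScl (by omega)
  rwa [this] at hSLk

end
end BES2

namespace BES3
open BES BES2

variable {n : ℕ}

/-- Resource data for a component `K`. -/
def ResData (r : ℕ) (G K : Finset (Finset (Fin n))) (p : Finset (Fin n)) : Prop :=
  p.card = 2 ∧ (∀ g ∈ K, ¬ p ⊆ g) ∧
  ∃ a b S3, S3 ⊆ K ∧ a ∈ S3 ∧ b ∈ S3 ∧ (a ∩ b).card = 2 ∧ p ⊆ a ∪ b ∧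
    S3.card = 3 ∧ (S3.biUnion id).card + 4 ≤ 3 * r

lemma two_le_inter {p A B : Finset (Fin n)} (h1 : p ⊆ A) (h2 : p ⊆ B) (hc : p.card = 2) :
    2 ≤ (A ∩ B).card :=
  hc ▸ Finset.card_le_card (Finset.subset_inter h1 h2)

/-- If a new edge meets the previous span in at most 2 vertices, any pair of the
span covered by the new edge lies inside the attachment edge. -/
lemma pin {p fnew anew : Finset (Fin n)} {Sprev : Finset (Finset (Fin n))}
    (hp2 : p.card = 2) (hpf : p ⊆ fnew) (hpW : p ⊆ Sprev.biUnion id)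
    (hfW : (fnew ∩ Sprev.biUnion id).card ≤ 2) (ha : anew ∈ Sprev)
    (h2 : 2 ≤ (anew ∩ fnew).card) : p ⊆ anew := by
  have haW : anew ⊆ Sprev.biUnion id := Finset.subset_biUnion_of_mem id ha
  have hsub : anew ∩ fnew ⊆ fnew ∩ Sprev.biUnion id :=
    Finset.subset_inter Finset.inter_subset_right
      (le_trans Finset.inter_subset_left haW)
  have heq : anew ∩ fnew = fnew ∩ Sprev.biUnion id :=
    Finset.eq_of_subset_of_card_le hsub (le_trans hfW h2)
  have : p ⊆ fnew ∩ Sprev.biUnion id := Finset.subset_inter hpf hpW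
  rw [← heq] at this
  exact le_trans this Finset.inter_subset_left

section
variable {r : ℕ} {G : Finset (Finset (Fin n))}
variable (hr : 3 ≤ r) (hG : IsRGraph r G) (hfree : GFree r 5 G)
include hr hG hfree

lemma sdiff_nonempty_of_inter {a b : Finset (Fin n)} (ha : a ∈ G)
    (hi : (a ∩ b).card = 2) : ∃ x, x ∈ a ∧ x ∉ b := by
  have h1 : (a \ b).card + (a ∩ b).card = a.card := Finset.card_sdiff_add_card_inter a b
  rw [hG a ha, hi] at h1
  have : 0 < (a \ b).card := by omega
  obtain ⟨x, hx⟩ := Finset.card_pos.mp this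
  exact ⟨x, Finset.mem_sdiff.mp hx⟩

lemma res_three {e : Finset (Fin n)} (he : e ∈ G) (h3 : (cl G e).card = 3) :
    ∃ p, ResData r G (cl G e) p := by
  have hLk : Lk (cl G e) := lk_cl hr hG hfree he
  have hKsub : cl G e ⊆ G := cl_subset
  obtain ⟨u3, -⟩ := lk_main hr hG hfree hLk hKsub (by omega)
  generalize hKdef : cl G e = K at hLk hKsub u3 h3 ⊢
  clear hKdef
  cases hLk with
  | single e' => simp at h3
  | grow S f3 hS hf3 a3 ha3 h23 =>
    have hcS : S.card = 2 := by
      have := card_insert_of_notMem hf3; omega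
    cases hS with
    | single e1 => simp at hcS
    | grow S' f2 hS' hf2 a2 ha2 h22 =>
      cases hS' with
      | grow S'' g hS'' h1 h2 h3' h4' =>
          have := Finset.card_pos.mpr (lk_nonempty hS'')
          have := card_insert_of_notMem h1
          have := card_insert_of_notMem hf2
          omega
      | single e1 =>
        have ha2' : a2 = e1 := by simpa using ha2
        rw [ha2'] at h22
        have he1G : e1 ∈ G := hKsub (by simp)
        have hf2G : f2 ∈ G := hKsub (by simp)
        have hf3G : f3 ∈ G := hKsub (by simp)
        have hne12 : e1 ≠ f2 := by
          intro hc; rw [hc] at hf2; simp at hf2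
        have i12 : (e1 ∩ f2).card = 2 :=
          le_antisymm (inter_le_two hr hG hfree he1G hf2G hne12) h22
        obtain ⟨x, hxe1, hxf2⟩ := sdiff_nonempty_of_inter hr hG hfree he1G i12
        obtain ⟨y, hyf2, hye1⟩ := sdiff_nonempty_of_inter hr hG hfree hf2G
          (by rwa [Finset.inter_comm])
        have hxy : x ≠ y := fun hc => hxf2 (hc ▸ hyf2)
        have hpc : ({x, y} : Finset (Fin n)).card = 2 := by
          rw [Finset.card_insert_of_notMem (by simpa using hxy), Finset.card_singleton]
        -- spans
        have hS2sub : (insert f2 {e1} : Finset (Finset (Fin n))) ⊆ G := by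
          intro z hz
          rcases Finset.mem_insert.mp hz with rfl | hz'
          · exact hf2G
          · simp only [Finset.mem_singleton] at hz'; rw [hz']; exact he1G
        obtain ⟨u2, -⟩ := lk_main hr hG hfree
          (Lk.grow {e1} f2 (Lk.single e1) hf2 e1 (by simp) h22) hS2sub
          (by rw [card_insert_of_notMem hf2]; simp)
        rw [card_insert_of_notMem hf2, Finset.card_singleton] at u2
        have hcK : (insert f3 (insert f2 ({e1} : Finset (Finset (Fin n))))).card = 3 := h3
        rw [hcK] at u3
        rw [Finset.biUnion_insert] at u3
        have hcui : (f3 ∪ ((insert f2 {e1} : Finset (Finset (Fin n))).biUnion id)).card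
            + (f3 ∩ ((insert f2 {e1} : Finset (Finset (Fin n))).biUnion id)).card
            = r + (((insert f2 {e1} : Finset (Finset (Fin n))).biUnion id)).card := by
          rw [Finset.card_union_add_card_inter, hG f3 hf3G]
        have hf3W2 : (f3 ∩ ((insert f2 {e1} : Finset (Finset (Fin n))).biUnion id)).card ≤ 2 := by
          simp only [id_eq] at u3 hcui ⊢
          omega
        have hpW2 : ({x, y} : Finset (Fin n)) ⊆ ((insert f2 {e1} : Finset (Finset (Fin n))).biUnion id) := by
          intro z hz
          rcases Finset.mem_insert.mp hz with rfl | hz'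
          · exact Finset.mem_biUnion.mpr ⟨e1, by simp, hxe1⟩
          · simp only [Finset.mem_singleton] at hz'
            exact Finset.mem_biUnion.mpr ⟨f2, by simp, by rw [hz']; exact hyf2⟩
        refine ⟨{x, y}, hpc, ?_, e1, f2, insert f3 (insert f2 {e1}), subset_rfl,
          by simp, by simp, i12, ?_, h3, ?_⟩
        · -- no edge of K contains the pair
          intro g hg hpg
          have hxg : x ∈ g := hpg (by simp)
          have hyg : y ∈ g := hpg (by simp)
          rcases Finset.mem_insert.mp hg with hgf3 | hg'
          · -- g = f3
            rw [hgf3] at hpg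
            have h2f3 : 2 ≤ (f3 ∩ ((insert f2 {e1} : Finset (Finset (Fin n))).biUnion id)).card :=
              two_le_inter hpg hpW2 hpc
            have ha3W2 : a3 ⊆ ((insert f2 {e1} : Finset (Finset (Fin n))).biUnion id) :=
              Finset.subset_biUnion_of_mem id ha3
            have hsub : a3 ∩ f3 ⊆ f3 ∩ ((insert f2 {e1} : Finset (Finset (Fin n))).biUnion id) :=
              Finset.subset_inter Finset.inter_subset_right
                (le_trans Finset.inter_subset_left ha3W2)
            have heq : a3 ∩ f3 = f3 ∩ ((insert f2 {e1} : Finset (Finset (Fin n))).biUnion id) :=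
              Finset.eq_of_subset_of_card_le hsub (le_trans hf3W2 h23)
            have hpa3 : ({x, y} : Finset (Fin n)) ⊆ a3 := by
              have : ({x, y} : Finset (Fin n)) ⊆ f3 ∩ ((insert f2 {e1} : Finset (Finset (Fin n))).biUnion id) :=
                Finset.subset_inter hpg hpW2
              rw [← heq] at this
              exact le_trans this Finset.inter_subset_left
            rcases Finset.mem_insert.mp ha3 with ha3f2 | ha3e1
            · exact hxf2 (by rw [← ha3f2]; exact hpa3 (by simp))
            · simp only [Finset.mem_singleton] at ha3e1
              exact hye1 (by rw [← ha3e1]; exact hpa3 (by simp))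
          · rcases Finset.mem_insert.mp hg' with hgf2 | hge1
            · exact hxf2 (by rw [← hgf2]; exact hxg)
            · simp only [Finset.mem_singleton] at hge1
              exact hye1 (by rw [← hge1]; exact hyg)
        · intro z hz
          rcases Finset.mem_insert.mp hz with rfl | hz'
          · exact Finset.mem_union_left _ hxe1
          · simp only [Finset.mem_singleton] at hz'
            rw [hz']; exact Finset.mem_union_right _ hyf2
        · rw [Finset.biUnion_insert]
          simp only [id_eq] at u3 ⊢
          omega

end
end BES3

namespace BES4
open BES BES2 BES3

variable {n : ℕ}

section
variable {r : ℕ} {G : Finset (Finset (Fin n))}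
variable (hr : 3 ≤ r) (hG : IsRGraph r G) (hfree : GFree r 5 G)
include hr hG hfree

lemma res_four {e : Finset (Fin n)} (he : e ∈ G) (h4 : (cl G e).card = 4) :
    ∃ p q, p ≠ q ∧ ResData r G (cl G e) p ∧ ResData r G (cl G e) q ∧
      (∀ h ∈ G, ¬ p ⊆ h) ∧ (∀ h ∈ G, ¬ q ⊆ h) := by
  have hLk : Lk (cl G e) := lk_cl hr hG hfree he
  have hKsub : cl G e ⊆ G := cl_subset
  obtain ⟨u4, -⟩ := lk_main hr hG hfree hLk hKsub (by omega)
  generalize hKdef : cl G e = K at hLk hKsub u4 h4 ⊢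
  clear hKdef
  cases hLk with
  | single e' => simp at h4
  | grow S3v f4 hS3 hf4 a4 ha4 h24 =>
    have hcS3 : S3v.card = 3 := by
      have := card_insert_of_notMem hf4; omega
    cases hS3 with
    | single e1 => simp at hcS3
    | grow S2v f3 hS2 hf3 a3 ha3 h23 =>
      have hcS2 : S2v.card = 2 := by
        have := card_insert_of_notMem hf3; omega
      cases hS2 with
      | single e1 => simp at hcS2
      | grow S1v f2 hS1 hf2 a2 ha2 h22 =>
        cases hS1 with
        | grow S0v g hS0 h1 h2 h3' h4' =>
            have := Finset.card_pos.mpr (lk_nonempty hS0)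
            have := card_insert_of_notMem h1
            have := card_insert_of_notMem hf2
            omega
        | single e1 =>
          have ha2' : a2 = e1 := by simpa using ha2
          rw [ha2'] at h22
          -- names for the prefixes
          set S2 := (insert f2 ({e1} : Finset (Finset (Fin n)))) with hS2def
          set S3 := insert f3 S2 with hS3def
          set K4 := insert f4 S3 with hK4def
          have he1S2 : e1 ∈ S2 := by rw [hS2def]; simp
          have hf2S2 : f2 ∈ S2 := by rw [hS2def]; simp
          have hS2S3 : S2 ⊆ S3 := by rw [hS3def]; exact Finset.subset_insert _ _
          have hS3K : S3 ⊆ K4 := by rw [hK4def]; exact Finset.subset_insert _ _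
          have he1G : e1 ∈ G := hKsub (hS3K (hS2S3 he1S2))
          have hf2G : f2 ∈ G := hKsub (hS3K (hS2S3 hf2S2))
          have hf3G : f3 ∈ G := hKsub (hS3K (by rw [hS3def]; simp))
          have hf4G : f4 ∈ G := hKsub (by rw [hK4def]; simp)
          have ha3G : a3 ∈ G := hKsub (hS3K (hS2S3 ha3))
          have hne12 : e1 ≠ f2 := by
            intro hc; rw [hc] at hf2; simp at hf2
          have i12 : (e1 ∩ f2).card = 2 :=
            le_antisymm (inter_le_two hr hG hfree he1G hf2G hne12) h22
          have hna3f3 : a3 ≠ f3 := fun hc => hf3 (hc ▸ ha3)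
          have i33 : (a3 ∩ f3).card = 2 :=
            le_antisymm (inter_le_two hr hG hfree ha3G hf3G hna3f3) h23
          -- cardinalities of prefixes
          have hcS2' : S2.card = 2 := hcS2
          have hcS3' : S3.card = 3 := hcS3
          have hcK4 : K4.card = 4 := h4
          -- spans
          have hLkS2 : Lk S2 := Lk.grow {e1} f2 (Lk.single e1) hf2 e1 (by simp) h22
          have hLkS3 : Lk S3 := Lk.grow S2 f3 hLkS2 hf3 a3 ha3 h23
          have hS2G : S2 ⊆ G := fun z hz => hKsub (hS3K (hS2S3 hz))
          have hS3G : S3 ⊆ G := fun z hz => hKsub (hS3K hz)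
          obtain ⟨u2, -⟩ := lk_main hr hG hfree hLkS2 hS2G (by omega)
          obtain ⟨u3, -⟩ := lk_main hr hG hfree hLkS3 hS3G (by omega)
          rw [hcS2'] at u2
          rw [hcS3'] at u3
          rw [hcK4] at u4
          have hbu3 : S3.biUnion id = f3 ∪ S2.biUnion id := by
            rw [hS3def]; exact Finset.biUnion_insert
          have hbu4 : K4.biUnion id = f4 ∪ S3.biUnion id := by
            rw [hK4def]; exact Finset.biUnion_insert
          have hcui3 : (f3 ∪ S2.biUnion id).card + (f3 ∩ S2.biUnion id).card
              = r + (S2.biUnion id).card := by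
            rw [Finset.card_union_add_card_inter, hG f3 hf3G]
          have hcui4 : (f4 ∪ S3.biUnion id).card + (f4 ∩ S3.biUnion id).card
              = r + (S3.biUnion id).card := by
            rw [Finset.card_union_add_card_inter, hG f4 hf4G]
          rw [hbu3] at u3
          rw [hbu4] at u4
          have hf3W2 : (f3 ∩ S2.biUnion id).card ≤ 2 := by omega
          have hf4W3 : (f4 ∩ S3.biUnion id).card ≤ 2 := by
            rw [hbu3] at hcui4 u4 ⊢
            omega
          -- the two pairs
          obtain ⟨x1, hx1e1, hx1f2⟩ := sdiff_nonempty_of_inter hr hG hfree he1G i12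
          obtain ⟨y1, hy1f2, hy1e1⟩ := sdiff_nonempty_of_inter hr hG hfree hf2G
            (by rwa [Finset.inter_comm])
          obtain ⟨x2, hx2a3, hx2f3⟩ := sdiff_nonempty_of_inter hr hG hfree ha3G i33
          have hy2ex : ∃ y2, y2 ∈ f3 ∧ y2 ∉ S2.biUnion id := by
            have h1 : (f3 \ S2.biUnion id).card + (f3 ∩ S2.biUnion id).card = f3.card :=
              Finset.card_sdiff_add_card_inter f3 (S2.biUnion id)
            rw [hG f3 hf3G] at h1
            have : 0 < (f3 \ S2.biUnion id).card := by omega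
            obtain ⟨y2, hy2⟩ := Finset.card_pos.mp this
            exact ⟨y2, Finset.mem_sdiff.mp hy2⟩
          obtain ⟨y2, hy2f3, hy2W2⟩ := hy2ex
          have hxy1 : x1 ≠ y1 := fun hc => hx1f2 (hc ▸ hy1f2)
          have he1W2 : e1 ⊆ S2.biUnion id := Finset.subset_biUnion_of_mem id he1S2
          have hf2W2 : f2 ⊆ S2.biUnion id := Finset.subset_biUnion_of_mem id hf2S2
          have ha3W2 : a3 ⊆ S2.biUnion id := Finset.subset_biUnion_of_mem id ha3
          have hxy2 : x2 ≠ y2 := fun hc => hy2W2 (hc ▸ ha3W2 hx2a3)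
          have hp1c : ({x1, y1} : Finset (Fin n)).card = 2 := by
            rw [Finset.card_insert_of_notMem (by simpa using hxy1), Finset.card_singleton]
          have hp2c : ({x2, y2} : Finset (Fin n)).card = 2 := by
            rw [Finset.card_insert_of_notMem (by simpa using hxy2), Finset.card_singleton]
          have hp1W2 : ({x1, y1} : Finset (Fin n)) ⊆ S2.biUnion id := by
            intro z hz
            rcases Finset.mem_insert.mp hz with rfl | hz'
            · exact he1W2 hx1e1
            · simp only [Finset.mem_singleton] at hz'
              rw [hz']; exact hf2W2 hy1f2
          have hp2W3 : ({x2, y2} : Finset (Fin n)) ⊆ S3.biUnion id := by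
            rw [hbu3]
            intro z hz
            rcases Finset.mem_insert.mp hz with rfl | hz'
            · exact Finset.mem_union_right _ (ha3W2 hx2a3)
            · simp only [Finset.mem_singleton] at hz'
              rw [hz']; exact Finset.mem_union_left _ hy2f3
          have hp1W3 : ({x1, y1} : Finset (Fin n)) ⊆ S3.biUnion id := by
            rw [hbu3]; exact le_trans hp1W2 Finset.subset_union_right
          -- p1 is not inside f3
          have hnp1f3 : ¬ ({x1, y1} : Finset (Fin n)) ⊆ f3 := by
            intro hpg
            have hpa3 := pin hp1c hpg hp1W2 hf3W2 ha3 h23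
            rcases Finset.mem_insert.mp ha3 with ha3f2 | ha3e1
            · exact hx1f2 (by rw [← ha3f2]; exact hpa3 (by simp))
            · simp only [Finset.mem_singleton] at ha3e1
              exact hy1e1 (by rw [← ha3e1]; exact hpa3 (by simp))
          -- p1 is not inside any edge of K4
          have hnp1 : ∀ g ∈ K4, ¬ ({x1, y1} : Finset (Fin n)) ⊆ g := by
            intro g hg hpg
            have hxg : x1 ∈ g := hpg (by simp)
            have hyg : y1 ∈ g := hpg (by simp)
            rw [hK4def] at hg
            rcases Finset.mem_insert.mp hg with hgf4 | hg3
            · -- g = f4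
              rw [hgf4] at hpg
              have hpa4 := pin hp1c hpg hp1W3 hf4W3 ha4 h24
              rcases Finset.mem_insert.mp ha4 with ha4f3 | ha4S2
              · exact hnp1f3 (by rw [← ha4f3]; exact hpa4)
              · rcases Finset.mem_insert.mp ha4S2 with ha4f2 | ha4e1
                · exact hx1f2 (by rw [← ha4f2]; exact hpa4 (by simp))
                · simp only [Finset.mem_singleton] at ha4e1
                  exact hy1e1 (by rw [← ha4e1]; exact hpa4 (by simp))
            · rcases Finset.mem_insert.mp hg3 with hgf3 | hg2
              · exact hnp1f3 (by rw [← hgf3]; exact hpg)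
              · rcases Finset.mem_insert.mp hg2 with hgf2 | hge1
                · exact hx1f2 (by rw [← hgf2]; exact hxg)
                · simp only [Finset.mem_singleton] at hge1
                  exact hy1e1 (by rw [← hge1]; exact hyg)
          -- p2 is not inside any edge of K4
          have hnp2 : ∀ g ∈ K4, ¬ ({x2, y2} : Finset (Fin n)) ⊆ g := by
            intro g hg hpg
            have hxg : x2 ∈ g := hpg (by simp)
            have hyg : y2 ∈ g := hpg (by simp)
            rw [hK4def] at hg
            rcases Finset.mem_insert.mp hg with hgf4 | hg3
            · rw [hgf4] at hpg
              have hpa4 := pin hp2c hpg hp2W3 hf4W3 ha4 h24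
              rcases Finset.mem_insert.mp ha4 with ha4f3 | ha4S2
              · exact hx2f3 (by rw [← ha4f3]; exact hpa4 (by simp))
              · have : y2 ∈ S2.biUnion id := by
                  refine (Finset.subset_biUnion_of_mem id ha4S2) (hpa4 (by simp))
                exact hy2W2 this
            · rcases Finset.mem_insert.mp hg3 with hgf3 | hg2
              · exact hx2f3 (by rw [← hgf3]; exact hxg)
              · have : y2 ∈ S2.biUnion id := by
                  refine (Finset.subset_biUnion_of_mem id hg2) hyg
                exact hy2W2 this
          -- the two pairs are distinct
          have hpne : ({x1, y1} : Finset (Fin n)) ≠ ({x2, y2} : Finset (Fin n)) := by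
            intro hc
            have : y2 ∈ ({x1, y1} : Finset (Fin n)) := by rw [hc]; simp
            exact hy2W2 (hp1W2 this)
          -- globally uncovered
          have hglob : ∀ p : Finset (Fin n), p.card = 2 → p ⊆ K4.biUnion id →
              (∀ g ∈ K4, ¬ p ⊆ g) → ∀ h ∈ G, ¬ p ⊆ h := by
            intro p hpc hpW4 hnp h hhG hph
            have hhK : h ∉ K4 := fun hc => hnp h hc hph
            have hcT : (insert h K4).card = 5 := by
              rw [card_insert_of_notMem hhK, hcK4]
            have hTsub : insert h K4 ⊆ G := by
              intro z hz
              rcases Finset.mem_insert.mp hz with rfl | hz'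
              · exact hhG
              · exact hKsub hz'
            have hbuT : (insert h K4).biUnion id = h ∪ K4.biUnion id :=
              Finset.biUnion_insert
            have hcuiT : (h ∪ K4.biUnion id).card + (h ∩ K4.biUnion id).card
                = r + (K4.biUnion id).card := by
              rw [Finset.card_union_add_card_inter, hG h hhG]
            have hhW4 : 2 ≤ (h ∩ K4.biUnion id).card := two_le_inter hph hpW4 hpc
            refine mk_config (insert h K4) hTsub hcT ?_ hfree.1
            rw [hbuT]
            rw [hbu4, hbu3] at hcuiT ⊢
            rw [hbu4, hbu3] at hhW4
            rw [hbu3] at u4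
            omega
          have hp1W4 : ({x1, y1} : Finset (Fin n)) ⊆ K4.biUnion id := by
            rw [hbu4]; exact le_trans hp1W3 Finset.subset_union_right
          have hp2W4 : ({x2, y2} : Finset (Fin n)) ⊆ K4.biUnion id := by
            rw [hbu4]; exact le_trans hp2W3 Finset.subset_union_right
          -- assemble
          refine ⟨{x1, y1}, {x2, y2}, hpne, ?_, ?_, ?_, ?_⟩
          · refine ⟨hp1c, hnp1, e1, f2, S3, hS3K, hS2S3 he1S2, hS2S3 hf2S2, i12, ?_, hcS3', ?_⟩
            · intro z hz
              rcases Finset.mem_insert.mp hz with rfl | hz'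
              · exact Finset.mem_union_left _ hx1e1
              · simp only [Finset.mem_singleton] at hz'
                rw [hz']; exact Finset.mem_union_right _ hy1f2
            · rw [hbu3]; omega
          · refine ⟨hp2c, hnp2, a3, f3, S3, hS3K, hS2S3 ha3, by rw [hS3def]; simp, i33, ?_,
              hcS3', ?_⟩
            · intro z hz
              rcases Finset.mem_insert.mp hz with rfl | hz'
              · exact Finset.mem_union_left _ hx2a3
              · simp only [Finset.mem_singleton] at hz'
                rw [hz']; exact Finset.mem_union_right _ hy2f3
            · rw [hbu3]; omega
          · exact hglob _ hp1c hp1W4 hnp1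
          · exact hglob _ hp2c hp2W4 hnp2

end
end BES4

namespace BES5
open BES BES2 BES3

variable {n : ℕ}

section
variable {r : ℕ} {G : Finset (Finset (Fin n))}
variable (hr : 3 ≤ r) (hG : IsRGraph r G) (hfree : GFree r 5 G)
include hr hG hfree

lemma ne_of_inter_two {a b : Finset (Fin n)} (ha : a ∈ G) (hi : (a ∩ b).card = 2) :
    a ≠ b := by
  intro hc
  rw [← hc, Finset.inter_self, hG a ha] at hi
  omega

lemma res_u2 {K1 K2 : Finset (Finset (Fin n))} {p : Finset (Fin n)}
    (h1 : K1 ⊆ G) (h2 : K2 ⊆ G) (hdisj : Disjoint K1 K2)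
    (hR1 : ResData r G K1 p) (hR2 : ResData r G K2 p) : False := by
  obtain ⟨hpc, -, a1, b1, S3, hS3K, ha1, hb1, -, hpab1, hS3c, hS3u⟩ := hR1
  obtain ⟨-, -, a2, b2, S3', hS3'K, ha2, hb2, hi2, hpab2, -, -⟩ := hR2
  have ha2G : a2 ∈ G := h2 (hS3'K ha2)
  have hb2G : b2 ∈ G := h2 (hS3'K hb2)
  have hne2 : a2 ≠ b2 := ne_of_inter_two hr hG hfree ha2G hi2
  have ha2K2 : a2 ∈ K2 := hS3'K ha2
  have hb2K2 : b2 ∈ K2 := hS3'K hb2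
  have ha2S3 : a2 ∉ S3 := fun hc => (Finset.disjoint_left.mp hdisj (hS3K hc)) ha2K2
  have hb2S3 : b2 ∉ S3 := fun hc => (Finset.disjoint_left.mp hdisj (hS3K hc)) hb2K2
  have hcT : (insert a2 (insert b2 S3)).card = 5 := by
    rw [card_insert_of_notMem (by simp [hne2, ha2S3]),
      card_insert_of_notMem hb2S3, hS3c]
  have hTsub : insert a2 (insert b2 S3) ⊆ G := by
    intro z hz
    rcases Finset.mem_insert.mp hz with rfl | hz'
    · exact ha2G
    · rcases Finset.mem_insert.mp hz' with rfl | hz''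
      · exact hb2G
      · exact h1 (hS3K hz'')
  have hpW1 : p ⊆ S3.biUnion id := by
    refine le_trans hpab1 (Finset.union_subset ?_ ?_)
    · exact Finset.subset_biUnion_of_mem id ha1
    · exact Finset.subset_biUnion_of_mem id hb1
  have hBA : ((a2 ∪ b2) ∪ S3.biUnion id).card + ((a2 ∪ b2) ∩ S3.biUnion id).card
      = (a2 ∪ b2).card + (S3.biUnion id).card :=
    Finset.card_union_add_card_inter _ _
  have hB : (a2 ∪ b2).card + (a2 ∩ b2).card = r + r := by
    rw [Finset.card_union_add_card_inter, hG a2 ha2G, hG b2 hb2G]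
  have h2BA : 2 ≤ ((a2 ∪ b2) ∩ S3.biUnion id).card := two_le_inter hpab2 hpW1 hpc
  refine mk_config _ hTsub hcT ?_ hfree.1
  rw [Finset.biUnion_insert, Finset.biUnion_insert]
  simp only [id_eq]
  rw [← Finset.union_assoc]
  omega

lemma res_three_cover {K : Finset (Finset (Fin n))} {p h : Finset (Fin n)}
    (hKG : K ⊆ G) (hLkK : Lk K) (hK3 : K.card = 3)
    (hclK : ∀ g h', g ∈ K → h' ∈ G → Adj g h' → h' ∈ K)
    (hRD : ResData r G K p) (hh : h ∈ G) (hph : p ⊆ h) :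
    (∀ h' ∈ G, p ⊆ h' → h' = h) ∧ (∀ h' ∈ G, ¬ Adj h h') := by
  obtain ⟨hpc, hnp, a1, b1, S3, hS3K, ha1, hb1, -, hpab1, hS3c, -⟩ := hRD
  have hhK : h ∉ K := fun hc => hnp h hc hph
  obtain ⟨u3, -⟩ := lk_main hr hG hfree hLkK hKG (by omega)
  rw [hK3] at u3
  have hpW : p ⊆ K.biUnion id := by
    refine le_trans hpab1 (Finset.union_subset ?_ ?_)
    · exact Finset.subset_biUnion_of_mem id (hS3K ha1)
    · exact Finset.subset_biUnion_of_mem id (hS3K hb1)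
  have hmain : ∀ h' ∈ G, ¬ Adj h h' := by
    intro h' hh'G hadj
    have hh'K : h' ∉ K := by
      intro hc
      exact hhK (hclK h' h hc hh (adj_symm hadj))
    have hne : h ≠ h' := hadj.1
    have hcT : (insert h' (insert h K)).card = 5 := by
      rw [card_insert_of_notMem (by simp [hne.symm, hh'K]),
        card_insert_of_notMem hhK, hK3]
    have hTsub : insert h' (insert h K) ⊆ G := by
      intro z hz
      rcases Finset.mem_insert.mp hz with rfl | hz'
      · exact hh'G
      · rcases Finset.mem_insert.mp hz' with rfl | hz''
        · exact hh
        · exact hKG hz''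
    have hc1 : (h ∪ K.biUnion id).card + (h ∩ K.biUnion id).card
        = r + (K.biUnion id).card := by
      rw [Finset.card_union_add_card_inter, hG h hh]
    have hc2 : (h' ∪ (h ∪ K.biUnion id)).card + (h' ∩ (h ∪ K.biUnion id)).card
        = r + (h ∪ K.biUnion id).card := by
      rw [Finset.card_union_add_card_inter, hG h' hh'G]
    have hi1 : 2 ≤ (h ∩ K.biUnion id).card := two_le_inter hph hpW hpc
    have hi2 : 2 ≤ (h' ∩ (h ∪ K.biUnion id)).card := by
      refine le_trans hadj.2 (Finset.card_le_card ?_)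
      exact Finset.subset_inter Finset.inter_subset_right
        (le_trans Finset.inter_subset_left Finset.subset_union_left)
    refine mk_config _ hTsub hcT ?_ hfree.1
    rw [Finset.biUnion_insert, Finset.biUnion_insert]
    simp only [id_eq]
    omega
  refine ⟨?_, hmain⟩
  intro h' hh'G hph'
  by_contra hne
  exact hmain h' hh'G ⟨fun hc => hne hc.symm, two_le_inter hph hph' hpc⟩

lemma res_u3 {K1 K2 : Finset (Finset (Fin n))} {p1 p2 h : Finset (Fin n)}
    (h1 : K1 ⊆ G) (h2 : K2 ⊆ G) (hdisj : Disjoint K1 K2)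
    (hR1 : ResData r G K1 p1) (hR2 : ResData r G K2 p2)
    (hh : h ∈ G) (hp1h : p1 ⊆ h) (hp2h : p2 ⊆ h) : False := by
  obtain ⟨hp1c, hnp1, a1, b1, S3, hS3K, ha1, hb1, hi1, hpab1, hS3c, -⟩ := hR1
  obtain ⟨hp2c, hnp2, a2, b2, S3', hS3'K, ha2, hb2, hi2, hpab2, -, -⟩ := hR2
  have ha1G : a1 ∈ G := h1 (hS3K ha1)
  have hb1G : b1 ∈ G := h1 (hS3K hb1)
  have ha2G : a2 ∈ G := h2 (hS3'K ha2)
  have hb2G : b2 ∈ G := h2 (hS3'K hb2)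
  have hne1 : a1 ≠ b1 := ne_of_inter_two hr hG hfree ha1G hi1
  have hne2 : a2 ≠ b2 := ne_of_inter_two hr hG hfree ha2G hi2
  have ha1K : a1 ∈ K1 := hS3K ha1
  have hb1K : b1 ∈ K1 := hS3K hb1
  have ha2K : a2 ∈ K2 := hS3'K ha2
  have hb2K : b2 ∈ K2 := hS3'K hb2
  have hhK1 : h ∉ K1 := fun hc => hnp1 h hc hp1h
  have hhK2 : h ∉ K2 := fun hc => hnp2 h hc hp2h
  have hd : ∀ x ∈ K1, x ∉ K2 := fun x hx => Finset.disjoint_left.mp hdisj hx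
  -- T = {a2, b2, h, a1, b1}
  have hcT : (insert a2 (insert b2 (insert h ({a1, b1} : Finset (Finset (Fin n)))))).card
      = 5 := by
    have c1 : ({a1, b1} : Finset (Finset (Fin n))).card = 2 := by
      rw [Finset.card_insert_of_notMem (by simpa using hne1), Finset.card_singleton]
    have hhab : h ∉ ({a1, b1} : Finset (Finset (Fin n))) := by
      simp only [Finset.mem_insert, Finset.mem_singleton]
      rintro (h1' | h1')
      · exact hhK1 (by rw [h1']; exact ha1K)
      · exact hhK1 (by rw [h1']; exact hb1K)
    have hb2m : b2 ∉ insert h ({a1, b1} : Finset (Finset (Fin n))) := by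
      simp only [Finset.mem_insert, Finset.mem_singleton]
      rintro (h1' | h1' | h1')
      · exact hhK2 (by rw [← h1']; exact hb2K)
      · exact hd a1 ha1K (by rw [← h1']; exact hb2K)
      · exact hd b1 hb1K (by rw [← h1']; exact hb2K)
    have ha2m : a2 ∉ insert b2 (insert h ({a1, b1} : Finset (Finset (Fin n)))) := by
      simp only [Finset.mem_insert, Finset.mem_singleton]
      rintro (h1' | h1' | h1' | h1')
      · exact hne2 h1'
      · exact hhK2 (by rw [← h1']; exact ha2K)
      · exact hd a1 ha1K (by rw [← h1']; exact ha2K)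
      · exact hd b1 hb1K (by rw [← h1']; exact ha2K)
    rw [card_insert_of_notMem ha2m, card_insert_of_notMem hb2m,
      card_insert_of_notMem hhab, c1]
  have hTsub : insert a2 (insert b2 (insert h ({a1, b1} : Finset (Finset (Fin n))))) ⊆ G := by
    intro z hz
    simp only [Finset.mem_insert, Finset.mem_singleton] at hz
    rcases hz with rfl | rfl | rfl | rfl | rfl
    · exact ha2G
    · exact hb2G
    · exact hh
    · exact ha1G
    · exact hb1G
  have hA : (a1 ∪ b1).card + (a1 ∩ b1).card = r + r := by
    rw [Finset.card_union_add_card_inter, hG a1 ha1G, hG b1 hb1G]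
  have hB : (a2 ∪ b2).card + (a2 ∩ b2).card = r + r := by
    rw [Finset.card_union_add_card_inter, hG a2 ha2G, hG b2 hb2G]
  have hc1 : (h ∪ (a1 ∪ b1)).card + (h ∩ (a1 ∪ b1)).card = r + (a1 ∪ b1).card := by
    rw [Finset.card_union_add_card_inter, hG h hh]
  have hi1' : 2 ≤ (h ∩ (a1 ∪ b1)).card := two_le_inter hp1h hpab1 hp1c
  have hc2 : ((a2 ∪ b2) ∪ (h ∪ (a1 ∪ b1))).card + ((a2 ∪ b2) ∩ (h ∪ (a1 ∪ b1))).card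
      = (a2 ∪ b2).card + (h ∪ (a1 ∪ b1)).card := Finset.card_union_add_card_inter _ _
  have hi2' : 2 ≤ ((a2 ∪ b2) ∩ (h ∪ (a1 ∪ b1))).card := by
    refine two_le_inter hpab2 ?_ hp2c
    exact le_trans hp2h Finset.subset_union_left
  refine mk_config _ hTsub hcT ?_ hfree.1
  rw [Finset.biUnion_insert, Finset.biUnion_insert, Finset.biUnion_insert]
  simp only [id_eq]
  rw [biUnion_pair_eq]
  rw [← Finset.union_assoc a2 b2 (h ∪ (a1 ∪ b1))]
  omega

end
end BES5

namespace BES6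
open BES BES2 BES3 BES4 BES5

variable {n : ℕ}

lemma cl_eq_singleton {G : Finset (Finset (Fin n))} {h : Finset (Fin n)} (hh : h ∈ G)
    (hno : ∀ h' ∈ G, ¬ Adj h h') : cl G h = {h} := by
  ext g
  simp only [Finset.mem_singleton, mem_cl]
  constructor
  · rintro ⟨hgG, hr⟩
    rcases Relation.ReflTransGen.cases_head hr with heq | ⟨c, hstep, -⟩
    · exact heq.symm
    · exact absurd hstep.2.2 (hno c hstep.2.1)
  · rintro rfl
    exact ⟨hh, Relation.ReflTransGen.refl⟩

lemma comp_cl_eq {G : Finset (Finset (Fin n))} {e g : Finset (Fin n)}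
    (hg : g ∈ cl G e) : cl G e = cl G g := cl_eq_of_mem hg

lemma comp_disjoint {G : Finset (Finset (Fin n))} {e f : Finset (Fin n)}
    (hne : cl G e ≠ cl G f) : Disjoint (cl G e) (cl G f) := by
  rw [Finset.disjoint_left]
  intro g hge hgf
  exact hne ((comp_cl_eq hge).trans (comp_cl_eq hgf).symm)

lemma mem_image_cl {G K : Finset (Finset (Fin n))} (hK : K ∈ G.image (cl G)) :
    ∃ e ∈ G, cl G e = K := by
  simpa using hK

end BES6

namespace BES7
open BES BES2 BES3 BES4 BES5 BES6

variable {n : ℕ}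

theorem main_nat {r : ℕ} {G : Finset (Finset (Fin n))}
    (hr : 3 ≤ r) (hG : IsRGraph r G) (hfree : GFree r 5 G) :
    G.card * (2 * r.choose 2) ≤ 2 * n.choose 2 + G.card := by
  classical
  set C := r.choose 2 with hCdef
  set 𝒦 := G.image (cl G) with h𝒦def
  -- basic properties of components
  have hcomp_ex : ∀ K ∈ 𝒦, ∃ e ∈ G, cl G e = K := by
    intro K hK; rw [h𝒦def] at hK; simpa using hK
  have hcomp_sub : ∀ K ∈ 𝒦, K ⊆ G := by
    intro K hK; obtain ⟨e, -, rfl⟩ := hcomp_ex K hK; exact cl_subset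
  have hcomp_cl : ∀ K ∈ 𝒦, ∀ g ∈ K, cl G g = K := by
    intro K hK g hg; obtain ⟨e, -, rfl⟩ := hcomp_ex K hK
    exact (comp_cl_eq hg).symm
  have hdisj : ∀ K1 ∈ 𝒦, ∀ K2 ∈ 𝒦, K1 ≠ K2 → Disjoint K1 K2 := by
    intro K1 h1 K2 h2 hne
    obtain ⟨e1, -, rfl⟩ := hcomp_ex K1 h1
    obtain ⟨e2, -, rfl⟩ := hcomp_ex K2 h2
    exact comp_disjoint hne
  have hclosed : ∀ K ∈ 𝒦, ∀ g ∈ K, ∀ h' ∈ G, Adj g h' → h' ∈ K := by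
    intro K hK g hg h' hh' hadj
    have hgG : g ∈ G := hcomp_sub K hK hg
    have : h' ∈ cl G g :=
      mem_cl.mpr ⟨hh', Relation.ReflTransGen.single ⟨hgG, hh', hadj⟩⟩
    rw [hcomp_cl K hK g hg] at this
    exact this
  have hG_eq : G = 𝒦.biUnion id := by
    ext g
    simp only [Finset.mem_biUnion, id_eq]
    constructor
    · intro hg
      exact ⟨cl G g, by rw [h𝒦def]; exact Finset.mem_image_of_mem _ hg, self_mem_cl hg⟩
    · rintro ⟨K, hK, hgK⟩
      exact hcomp_sub K hK hgK
  have hLkK : ∀ K ∈ 𝒦, Lk K := by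
    intro K hK; obtain ⟨e, he, rfl⟩ := hcomp_ex K hK
    exact lk_cl hr hG hfree he
  have hcard14 : ∀ K ∈ 𝒦, 1 ≤ K.card ∧ K.card ≤ 4 := by
    intro K hK
    obtain ⟨e, he, rfl⟩ := hcomp_ex K hK
    exact ⟨Finset.card_pos.mpr ⟨e, self_mem_cl he⟩, cl_card_le_four hr hG hfree he⟩
  have hM : G.card = ∑ K ∈ 𝒦, K.card := by
    conv_lhs => rw [hG_eq]
    exact Finset.card_biUnion (fun K1 h1 K2 h2 hne => hdisj K1 h1 K2 h2 hne)
  -- covered pairs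
  have hCov_eq : G.biUnion pairs = 𝒦.biUnion (fun K => K.biUnion pairs) := by
    conv_lhs => rw [hG_eq]
    exact Finset.biUnion_biUnion _ _ _
  have hCovDisj : ∀ K1 ∈ 𝒦, ∀ K2 ∈ 𝒦, K1 ≠ K2 →
      Disjoint (K1.biUnion pairs) (K2.biUnion pairs) := by
    intro K1 h1 K2 h2 hne
    rw [Finset.disjoint_left]
    intro p hp1 hp2
    obtain ⟨g1, hg1, hpg1⟩ := Finset.mem_biUnion.mp hp1
    obtain ⟨g2, hg2, hpg2⟩ := Finset.mem_biUnion.mp hp2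
    rcases mem_pairs.mp hpg1 with ⟨hps1, hpc⟩
    rcases mem_pairs.mp hpg2 with ⟨hps2, -⟩
    by_cases hg12 : g1 = g2
    · exact Finset.disjoint_left.mp (hdisj K1 h1 K2 h2 hne) hg1 (hg12 ▸ hg2)
    · have hadj : Adj g1 g2 := ⟨hg12, two_le_inter hps1 hps2 hpc⟩
      have : g2 ∈ K1 := hclosed K1 h1 g1 hg1 g2 (hcomp_sub K2 h2 hg2) hadj
      exact Finset.disjoint_left.mp (hdisj K1 h1 K2 h2 hne) this hg2
  have hCovCard : (G.biUnion pairs).card = ∑ K ∈ 𝒦, (K.biUnion pairs).card := by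
    rw [hCov_eq]
    exact Finset.card_biUnion (fun K1 h1 K2 h2 hne => hCovDisj K1 h1 K2 h2 hne)
  have hcovK : ∀ K ∈ 𝒦, K.card * C + 1 ≤ (K.biUnion pairs).card + K.card := by
    intro K hK
    exact (lk_main hr hG hfree (hLkK K hK) (hcomp_sub K hK) (hcard14 K hK).2).2
  have hsum1 : G.card * C + 𝒦.card ≤ (G.biUnion pairs).card + G.card := by
    have h := Finset.sum_le_sum hcovK
    rw [Finset.sum_add_distrib, Finset.sum_add_distrib, ← Finset.sum_mul] at h
    simp only [Finset.sum_const, smul_eq_mul, mul_one] at h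
    rw [hM, hCovCard]
    omega
  -- classification of components by size
  set F1 := 𝒦.filter (fun K => K.card = 1) with hF1
  set F2 := 𝒦.filter (fun K => K.card = 2) with hF2
  set F3 := 𝒦.filter (fun K => K.card = 3) with hF3
  set F4 := 𝒦.filter (fun K => K.card = 4) with hF4
  have hunion : 𝒦 = F1 ∪ (F2 ∪ (F3 ∪ F4)) := by
    ext K
    simp only [hF1, hF2, hF3, hF4, Finset.mem_union, Finset.mem_filter]
    constructor
    · intro hK
      have := hcard14 K hK
      rcases (by omega : K.card = 1 ∨ K.card = 2 ∨ K.card = 3 ∨ K.card = 4) with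
        h | h | h | h
      · exact Or.inl ⟨hK, h⟩
      · exact Or.inr (Or.inl ⟨hK, h⟩)
      · exact Or.inr (Or.inr (Or.inl ⟨hK, h⟩))
      · exact Or.inr (Or.inr (Or.inr ⟨hK, h⟩))
    · rintro (⟨h, -⟩ | ⟨h, -⟩ | ⟨h, -⟩ | ⟨h, -⟩) <;> exact h
  have hd34 : Disjoint F3 F4 := by
    rw [Finset.disjoint_left]
    intro K h3 h4
    rw [hF3, Finset.mem_filter] at h3
    rw [hF4, Finset.mem_filter] at h4
    omega
  have hd234 : Disjoint F2 (F3 ∪ F4) := by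
    rw [Finset.disjoint_left]
    intro K h2 h34
    rw [hF2, Finset.mem_filter] at h2
    rcases Finset.mem_union.mp h34 with h | h
    · rw [hF3, Finset.mem_filter] at h; omega
    · rw [hF4, Finset.mem_filter] at h; omega
  have hd1234 : Disjoint F1 (F2 ∪ (F3 ∪ F4)) := by
    rw [Finset.disjoint_left]
    intro K h1 h234
    rw [hF1, Finset.mem_filter] at h1
    rcases Finset.mem_union.mp h234 with h | h34
    · rw [hF2, Finset.mem_filter] at h; omega
    · rcases Finset.mem_union.mp h34 with h | h
      · rw [hF3, Finset.mem_filter] at h; omega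
      · rw [hF4, Finset.mem_filter] at h; omega
  have h𝒦card : 𝒦.card = F1.card + F2.card + F3.card + F4.card := by
    conv_lhs => rw [hunion]
    rw [Finset.card_union_of_disjoint hd1234, Finset.card_union_of_disjoint hd234,
      Finset.card_union_of_disjoint hd34]
    ring
  have hMsum : G.card = F1.card * 1 + F2.card * 2 + F3.card * 3 + F4.card * 4 := by
    rw [hM]
    conv_lhs => rw [hunion]
    rw [Finset.sum_union hd1234, Finset.sum_union hd234, Finset.sum_union hd34]
    rw [Finset.sum_const_nat (m := 1) (fun K hK => by
        rw [hF1, Finset.mem_filter] at hK; exact hK.2),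
      Finset.sum_const_nat (m := 2) (fun K hK => by
        rw [hF2, Finset.mem_filter] at hK; exact hK.2),
      Finset.sum_const_nat (m := 3) (fun K hK => by
        rw [hF3, Finset.mem_filter] at hK; exact hK.2),
      Finset.sum_const_nat (m := 4) (fun K hK => by
        rw [hF4, Finset.mem_filter] at hK; exact hK.2)]
    omega
  -- resources for 3-components
  have hF3K : F3 ⊆ 𝒦 := Finset.filter_subset _ _
  have hF4K : F4 ⊆ 𝒦 := Finset.filter_subset _ _
  have h3res : ∀ K, K ∈ F3 → ∃ p, ResData r G K p := by
    intro K hK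
    rw [hF3, Finset.mem_filter] at hK
    obtain ⟨e, heG, hecl⟩ := hcomp_ex K hK.1
    subst hecl
    exact res_three hr hG hfree heG hK.2
  choose! p3 hp3 using h3res
  have h4res : ∀ K, K ∈ F4 → ∃ p q, p ≠ q ∧ ResData r G K p ∧ ResData r G K q ∧
      (∀ h ∈ G, ¬ p ⊆ h) ∧ (∀ h ∈ G, ¬ q ⊆ h) := by
    intro K hK
    rw [hF4, Finset.mem_filter] at hK
    obtain ⟨e, heG, hecl⟩ := hcomp_ex K hK.1
    subst hecl
    exact res_four hr hG hfree heG hK.2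
  choose! p4 q4 h4 using h4res
  have hU2 : ∀ K ∈ 𝒦, ∀ K' ∈ 𝒦, K ≠ K' → ∀ p, ResData r G K p → ResData r G K' p →
      False := fun K hK K' hK' hne p h1 h2 =>
    res_u2 hr hG hfree (hcomp_sub K hK) (hcomp_sub K' hK') (hdisj K hK K' hK' hne) h1 h2
  -- split 3-components according to whether the resource pair is covered
  set KA := F3.filter (fun K => ∀ h ∈ G, ¬ p3 K ⊆ h) with hKA
  set KB := F3.filter (fun K => ¬ ∀ h ∈ G, ¬ p3 K ⊆ h) with hKB
  have hKAB : KA.card + KB.card = F3.card :=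
    Finset.card_filter_add_card_filter_not _
  have hKAF3 : KA ⊆ F3 := Finset.filter_subset _ _
  have hKBF3 : KB ⊆ F3 := Finset.filter_subset _ _
  have hKBcov : ∀ K, K ∈ KB → ∃ h, h ∈ G ∧ p3 K ⊆ h := by
    intro K hK
    rw [hKB, Finset.mem_filter] at hK
    have := hK.2
    push_neg at this
    obtain ⟨h, hh1, hh2⟩ := this
    exact ⟨h, hh1, hh2⟩
  choose! hB hhB using hKBcov
  -- each component in KB points to a singleton component
  have hsingle : ∀ K ∈ KB, cl G (hB K) = {(hB K)} ∧ cl G (hB K) ∈ F1 := by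
    intro K hK
    have hK3 : K ∈ F3 := hKBF3 hK
    have hKc3 : K.card = 3 := by
      rw [hF3, Finset.mem_filter] at hK3; exact hK3.2
    obtain ⟨-, hnoadj⟩ := res_three_cover hr hG hfree (hcomp_sub K (hF3K hK3))
      (hLkK K (hF3K hK3)) hKc3
      (fun g h' hg hh' hadj => hclosed K (hF3K hK3) g hg h' hh' hadj)
      (hp3 K hK3) (hhB K hK).1 (hhB K hK).2
    have hs : cl G (hB K) = {(hB K)} := cl_eq_singleton (hhB K hK).1 hnoadj
    refine ⟨hs, ?_⟩
    rw [hF1, Finset.mem_filter]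
    constructor
    · rw [h𝒦def]; exact Finset.mem_image_of_mem _ (hhB K hK).1
    · rw [hs]; simp
  have hGoal2 : KB.card ≤ F1.card := by
    refine Finset.card_le_card_of_injOn (fun K => cl G (hB K))
      (fun K hK => (hsingle K hK).2) ?_
    intro K hK K' hK' heq
    by_contra hne
    have h1 := (hsingle K hK).1
    have h2 := (hsingle K' hK').1
    simp only at heq
    rw [h1, h2] at heq
    have hBeq : hB K = hB K' := by
      have := Finset.mem_singleton.mp (heq ▸ Finset.mem_singleton_self (hB K))
      exact this
    refine res_u3 hr hG hfree (hcomp_sub K (hF3K (hKBF3 hK)))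
      (hcomp_sub K' (hF3K (hKBF3 hK')))
      (hdisj _ (hF3K (hKBF3 hK)) _ (hF3K (hKBF3 hK')) hne)
      (hp3 K (hKBF3 hK)) (hp3 K' (hKBF3 hK')) (hhB K hK).1 (hhB K hK).2 ?_
    rw [hBeq]
    exact (hhB K' hK').2
  -- the uncovered pairs coming from KA and F4
  have hResKA : ∀ K ∈ KA, ResData r G K (p3 K) := fun K hK => hp3 K (hKAF3 hK)
  set U1 := KA.image p3 with hU1def
  set U2 := F4.image p4 with hU2def
  set U3 := F4.image q4 with hU3def
  have hinj1 : Set.InjOn p3 KA := by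
    intro K hK K' hK' heq
    simp only [Finset.coe_mem, Finset.mem_coe] at hK hK'
    by_contra hne
    refine hU2 K (hF3K (hKAF3 hK)) K' (hF3K (hKAF3 hK')) hne (p3 K)
      (hResKA K hK) ?_
    rw [heq]; exact hResKA K' hK'
  have hinj2 : Set.InjOn p4 F4 := by
    intro K hK K' hK' heq
    simp only [Finset.mem_coe] at hK hK'
    by_contra hne
    refine hU2 K (hF4K hK) K' (hF4K hK') hne (p4 K) ((h4 K hK).2.1) ?_
    rw [heq]; exact ((h4 K' hK').2.1)
  have hinj3 : Set.InjOn q4 F4 := by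
    intro K hK K' hK' heq
    simp only [Finset.mem_coe] at hK hK'
    by_contra hne
    refine hU2 K (hF4K hK) K' (hF4K hK') hne (q4 K) ((h4 K hK).2.2.1) ?_
    rw [heq]; exact ((h4 K' hK').2.2.1)
  have hcardU1 : U1.card = KA.card := Finset.card_image_of_injOn hinj1
  have hcardU2 : U2.card = F4.card := Finset.card_image_of_injOn hinj2
  have hcardU3 : U3.card = F4.card := Finset.card_image_of_injOn hinj3
  have hdU23 : Disjoint U2 U3 := by
    rw [Finset.disjoint_left]
    intro pr h2 h3
    obtain ⟨K, hK, hpr⟩ := Finset.mem_image.mp h2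
    obtain ⟨K', hK', hpr'⟩ := Finset.mem_image.mp h3
    by_cases hne : K = K'
    · subst hne
      exact (h4 K hK).1 (hpr.trans hpr'.symm)
    · refine hU2 K (hF4K hK) K' (hF4K hK') hne (p4 K) ((h4 K hK).2.1) ?_
      rw [hpr.trans hpr'.symm]
      exact ((h4 K' hK').2.2.1)
  have hdU123 : Disjoint U1 (U2 ∪ U3) := by
    rw [Finset.disjoint_left]
    intro pr h1 h23
    obtain ⟨K, hK, hpr⟩ := Finset.mem_image.mp h1
    have hK3ne4 : ∀ K', K' ∈ F4 → K ≠ K' := by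
      intro K' hK' hc
      have hc3 : K.card = 3 := by
        have := hKAF3 hK; rw [hF3, Finset.mem_filter] at this; exact this.2
      have hc4 : K'.card = 4 := by
        rw [hF4, Finset.mem_filter] at hK'; exact hK'.2
      rw [hc] at hc3; omega
    rcases Finset.mem_union.mp h23 with h | h
    · obtain ⟨K', hK', hpr'⟩ := Finset.mem_image.mp h
      refine hU2 K (hF3K (hKAF3 hK)) K' (hF4K hK') (hK3ne4 K' hK') (p3 K)
        (hResKA K hK) ?_
      rw [hpr.trans hpr'.symm]
      exact ((h4 K' hK').2.1)
    · obtain ⟨K', hK', hpr'⟩ := Finset.mem_image.mp h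
      refine hU2 K (hF3K (hKAF3 hK)) K' (hF4K hK') (hK3ne4 K' hK') (p3 K)
        (hResKA K hK) ?_
      rw [hpr.trans hpr'.symm]
      exact ((h4 K' hK').2.2.1)
  have hcardU : (U1 ∪ (U2 ∪ U3)).card = KA.card + (F4.card + F4.card) := by
    rw [Finset.card_union_of_disjoint hdU123, Finset.card_union_of_disjoint hdU23,
      hcardU1, hcardU2, hcardU3]
  -- all pairs
  have hAllcard : ((Finset.univ : Finset (Fin n)).powersetCard 2).card = n.choose 2 := by
    rw [Finset.card_powersetCard, Finset.card_univ, Fintype.card_fin]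
  have hCovSub : G.biUnion pairs ⊆ (Finset.univ : Finset (Fin n)).powersetCard 2 := by
    intro p hp
    obtain ⟨g, -, hpg⟩ := Finset.mem_biUnion.mp hp
    rcases mem_pairs.mp hpg with ⟨-, hpc⟩
    exact Finset.mem_powersetCard.mpr ⟨Finset.subset_univ _, hpc⟩
  have hUSub : (U1 ∪ (U2 ∪ U3)) ⊆
      ((Finset.univ : Finset (Fin n)).powersetCard 2) \ (G.biUnion pairs) := by
    intro pr hpr
    have hmain : pr.card = 2 ∧ ∀ h ∈ G, ¬ pr ⊆ h := by
      rcases Finset.mem_union.mp hpr with h1 | h23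
      · obtain ⟨K, hK, hpr'⟩ := Finset.mem_image.mp h1
        have hunc : ∀ h ∈ G, ¬ p3 K ⊆ h := by
          rw [hKA, Finset.mem_filter] at hK; exact hK.2
        refine ⟨?_, by rw [← hpr']; exact hunc⟩
        rw [← hpr']; exact (hResKA K hK).1
      · rcases Finset.mem_union.mp h23 with h | h
        · obtain ⟨K, hK, hpr'⟩ := Finset.mem_image.mp h
          refine ⟨?_, by rw [← hpr']; exact (h4 K hK).2.2.2.1⟩
          rw [← hpr']; exact ((h4 K hK).2.1).1
        · obtain ⟨K, hK, hpr'⟩ := Finset.mem_image.mp h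
          refine ⟨?_, by rw [← hpr']; exact (h4 K hK).2.2.2.2⟩
          rw [← hpr']; exact ((h4 K hK).2.2.1).1
    rw [Finset.mem_sdiff]
    constructor
    · exact Finset.mem_powersetCard.mpr ⟨Finset.subset_univ _, hmain.1⟩
    · intro hc
      obtain ⟨g, hgG, hpg⟩ := Finset.mem_biUnion.mp hc
      exact hmain.2 g hgG (mem_pairs.mp hpg).1
  have hfinal : (G.biUnion pairs).card + (KA.card + (F4.card + F4.card)) ≤ n.choose 2 := by
    have hdisjCU : Disjoint (G.biUnion pairs) (U1 ∪ (U2 ∪ U3)) := by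
      refine Finset.disjoint_left.mpr ?_
      intro pr hpr hpr'
      exact (Finset.mem_sdiff.mp (hUSub hpr')).2 hpr
    have hsub : (G.biUnion pairs) ∪ (U1 ∪ (U2 ∪ U3)) ⊆
        (Finset.univ : Finset (Fin n)).powersetCard 2 := by
      refine Finset.union_subset hCovSub ?_
      exact le_trans hUSub (Finset.sdiff_subset)
    have := Finset.card_le_card hsub
    rw [Finset.card_union_of_disjoint hdisjCU, hcardU, hAllcard] at this
    exact this
  -- final arithmetic
  have hx : G.card * (2 * C) = 2 * (G.card * C) := by ring
  omega


end BES7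

/-- Every `𝒢^{(r)}_5`-free `r`-graph on `n` vertices has at most `(2/(r²-r-1))·C(n,2)` edges. -/
theorem upper_bound_five (r n : ℕ) (hr : 3 ≤ r) (hn : 2 ≤ n)
    (G : Finset (Finset (Fin n))) (hG : IsRGraph r G) (hfree : GFree r 5 G) :
    (G.card : ℝ) ≤ (2 / ((r : ℝ) ^ 2 - r - 1)) * (n.choose 2 : ℝ) := by

  have hmain := BES7.main_nat hr hG hfree
  -- 2 * (r choose 2) = r * r - r
  have h2C : 2 * r.choose 2 = r * r - r := by
    rw [Nat.choose_two_right]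
    obtain ⟨m, rfl⟩ : ∃ m, r = m + 1 := ⟨r - 1, by omega⟩
    have hdvd : 2 ∣ (m + 1) * m := by
      rw [mul_comm]
      exact (Nat.even_mul_succ_self m).two_dvd
    have h1 : 2 * ((m + 1) * m / 2) = (m + 1) * m := Nat.mul_div_cancel' hdvd
    have h2 : (m + 1) * m + (m + 1) = (m + 1) * (m + 1) := by ring
    have h3 : (m + 1) * ((m + 1) - 1) = (m+1) * m := by simp
    rw [h3, h1]
    omega
  have h3r : 3 * r ≤ r * r := Nat.mul_le_mul_right r hr
  have hr1 : r + 1 ≤ r * r := by omega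
  have hnat : G.card * (r * r - r - 1) ≤ 2 * n.choose 2 := by
    rw [h2C] at hmain
    have e1 : r * r - r = (r * r - r - 1) + 1 := by omega
    rw [e1, Nat.mul_add, Nat.mul_one] at hmain
    omega
  -- cast to the reals
  have hrR : (3 : ℝ) ≤ (r : ℝ) := by exact_mod_cast hr
  have hD : (0 : ℝ) < (r : ℝ) ^ 2 - r - 1 := by nlinarith
  rw [div_mul_eq_mul_div, le_div_iff₀ hD]
  have hcast : ((r * r - r - 1 : ℕ) : ℝ) = (r : ℝ) ^ 2 - r - 1 := by
    have hc1 : r ≤ r * r := by omega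
    have hc2 : 1 ≤ r * r - r := by omega
    push_cast [Nat.cast_sub hc1, Nat.cast_sub hc2]
    ring
  calc (G.card : ℝ) * ((r : ℝ) ^ 2 - r - 1) = (G.card : ℝ) * ((r * r - r - 1 : ℕ) : ℝ) := by
        rw [hcast]
    _ ≤ 2 * (n.choose 2 : ℝ) := by
        rw [← Nat.cast_ofNat (n := 2), ← Nat.cast_mul, ← Nat.cast_mul]
        exact_mod_cast hnat
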